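/- For every integer r ≥ 2 there exists a constant c > 0 such that every r-uniform hypergraph with n ≥ 1 vertices and m edges whose average degree d = r·m/n satisfies d ≥ 1 contains an independent set of size at least c · n / d^{1/(r−1)}. -/

import Mathlib

open Finset

lemma aux_descFactorial_mul_pow_le (r : ℕ) {s n : ℕ} (hsn : s ≤ n) :
    s.descFactorial r * n ^ r ≤ n.descFactorial r * s ^ r := by
  induction r with
  | zero => simp
  | succ r ih =>
    rw [Nat.descFactorial_succ, Nat.descFactorial_succ, pow_succ, pow_succ]
    have h1 : (s - r) * n ≤ (n - r) * s := by
      have h2 : r * s ≤ r * n := Nat.mul_le_mul_left r hsn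
      have h3 : (s - r) * n = s * n - r * n := by rw [Nat.sub_mul]
      have h4 : (n - r) * s = n * s - r * s := by rw [Nat.sub_mul]
      have h5 : s * n = n * s := Nat.mul_comm s n
      omega
    calc (s - r) * s.descFactorial r * (n ^ r * n)
        = ((s - r) * n) * (s.descFactorial r * n ^ r) := by ring
      _ ≤ ((n - r) * s) * (n.descFactorial r * s ^ r) := Nat.mul_le_mul h1 ih
      _ = (n - r) * n.descFactorial r * (s ^ r * s) := by ring

lemma aux_card_supersets {α : Type*} [DecidableEq α] [Fintype α]
    (e : Finset α) (s : ℕ) (hes : e.card ≤ s) :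
    (((univ : Finset α).powersetCard s).filter (fun T => e ⊆ T)).card
      = (Fintype.card α - e.card).choose (s - e.card) := by
  have h := Finset.card_powersetCard (s - e.card) eᶜ
  rw [card_compl] at h
  rw [← h]
  apply Finset.card_bij' (fun T _ => T \ e) (fun U _ => U ∪ e)
  · intro T hT
    rw [mem_filter, mem_powersetCard] at hT
    rw [mem_powersetCard]
    constructor
    · intro v hv
      rw [mem_sdiff] at hv
      simpa using hv.2
    · rw [card_sdiff_of_subset hT.2, hT.1.2]
  · intro U hU
    rw [mem_powersetCard] at hU
    rw [mem_filter, mem_powersetCard]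
    have hdisj : Disjoint U e := by
      rw [Finset.disjoint_left]
      intro v hv
      have := hU.1 hv
      simpa using this
    refine ⟨⟨subset_univ _, ?_⟩, subset_union_right⟩
    rw [card_union_of_disjoint hdisj, hU.2, Nat.sub_add_cancel hes]
  · intro T hT
    rw [mem_filter] at hT
    exact sdiff_union_of_subset hT.2
  · intro U hU
    rw [mem_powersetCard] at hU
    have hdisj : Disjoint U e := by
      rw [Finset.disjoint_left]
      intro v hv
      have := hU.1 hv
      simpa using this
    exact union_sdiff_cancel_right hdisj

lemma aux_exists_sparse_subset {n r : ℕ} (E : Finset (Finset (Fin n)))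
    (hEcard : ∀ e ∈ E, e.card = r) (s : ℕ) (hs : s ≤ n) :
    ∃ T ∈ (univ : Finset (Fin n)).powersetCard s,
      (E.filter (fun e => e ⊆ T)).card * n ^ r ≤ E.card * s ^ r := by
  have hPne : ((univ : Finset (Fin n)).powersetCard s).Nonempty := by
    rw [Finset.powersetCard_nonempty]
    simpa using hs
  by_cases hrs : r ≤ s
  · obtain ⟨T, hT, hmin⟩ :=
      Finset.exists_min_image _ (fun T : Finset (Fin n) => (E.filter (fun e => e ⊆ T)).card) hPne
    refine ⟨T, hT, ?_⟩
    set P := (univ : Finset (Fin n)).powersetCard s with hP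
    set fT := (E.filter (fun e => e ⊆ T)).card with hfT
    have hsum : ∑ T' ∈ P, (E.filter (fun e => e ⊆ T')).card
        = E.card * ((n - r).choose (s - r)) := by
      simp_rw [Finset.card_filter]
      rw [Finset.sum_comm]
      have hinner : ∀ e ∈ E,
          (∑ T' ∈ P, if e ⊆ T' then 1 else 0) = (n - r).choose (s - r) := by
        intro e he
        rw [← Finset.card_filter]
        have h := aux_card_supersets e s (by rw [hEcard e he]; omega)
        rw [hEcard e he, Fintype.card_fin] at h
        exact h
      rw [Finset.sum_congr rfl hinner, Finset.sum_const, smul_eq_mul]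
    have havg : P.card * fT ≤ E.card * ((n - r).choose (s - r)) := by
      rw [← hsum, ← smul_eq_mul]
      exact Finset.card_nsmul_le_sum P _ fT (fun T' hT' => hmin T' hT')
    rw [hP, Finset.card_powersetCard, Finset.card_univ, Fintype.card_fin] at havg
    have h1 : fT * (n.choose r * (n - r).choose (s - r))
        ≤ E.card * ((n - r).choose (s - r) * s.choose r) := by
      rw [← Nat.choose_mul (n := n) hrs]
      calc fT * (n.choose s * s.choose r) = (n.choose s * fT) * s.choose r := by ring
        _ ≤ (E.card * (n - r).choose (s - r)) * s.choose r := Nat.mul_le_mul_right _ havg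
        _ = E.card * ((n - r).choose (s - r) * s.choose r) := by ring
    have hcpos : 0 < (n - r).choose (s - r) := Nat.choose_pos (Nat.sub_le_sub_right hs r)
    have h2 : fT * n.choose r ≤ E.card * s.choose r := by
      apply Nat.le_of_mul_le_mul_right _ hcpos
      calc fT * n.choose r * (n - r).choose (s - r)
          = fT * (n.choose r * (n - r).choose (s - r)) := by ring
        _ ≤ E.card * ((n - r).choose (s - r) * s.choose r) := h1
        _ = E.card * s.choose r * (n - r).choose (s - r) := by ring
    have h3 : fT * n.descFactorial r ≤ E.card * s.descFactorial r := by
      rw [Nat.descFactorial_eq_factorial_mul_choose, Nat.descFactorial_eq_factorial_mul_choose]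
      calc fT * (r.factorial * n.choose r) = r.factorial * (fT * n.choose r) := by ring
        _ ≤ r.factorial * (E.card * s.choose r) := Nat.mul_le_mul_left _ h2
        _ = E.card * (r.factorial * s.choose r) := by ring
    have hdpos : 0 < n.descFactorial r := by
      rw [Nat.descFactorial_eq_factorial_mul_choose]
      exact Nat.mul_pos r.factorial_pos (Nat.choose_pos (le_trans hrs hs))
    apply Nat.le_of_mul_le_mul_right _ hdpos
    calc fT * n ^ r * n.descFactorial r = (fT * n.descFactorial r) * n ^ r := by ring
      _ ≤ (E.card * s.descFactorial r) * n ^ r := Nat.mul_le_mul_right _ h3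
      _ = E.card * (s.descFactorial r * n ^ r) := by ring
      _ ≤ E.card * (n.descFactorial r * s ^ r) :=
          Nat.mul_le_mul_left _ (aux_descFactorial_mul_pow_le r hs)
      _ = E.card * s ^ r * n.descFactorial r := by ring
  · obtain ⟨T, hT⟩ := hPne
    refine ⟨T, hT, ?_⟩
    have hempty : E.filter (fun e => e ⊆ T) = ∅ := by
      rw [Finset.filter_eq_empty_iff]
      intro e he hsub
      have h1 := Finset.card_le_card hsub
      rw [Finset.mem_powersetCard] at hT
      rw [hEcard e he, hT.2] at h1
      omega
    rw [hempty]
    simp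

/-- Spencer's theorem: for every `r ≥ 2` there is a constant `c > 0` such that
every `r`-uniform hypergraph with `n ≥ 1` vertices and `m` edges whose average
degree `d = r·m/n` satisfies `d ≥ 1` contains an independent set (a set of
vertices containing no edge) of size at least `c · n / d^(1/(r-1))`. -/
theorem spencer_independent_set (r : ℕ) (hr : 2 ≤ r) :
    ∃ c : ℝ, 0 < c ∧
      ∀ (n : ℕ), 1 ≤ n → ∀ E : Finset (Finset (Fin n)),
        (∀ e ∈ E, e.card = r) →
        (1 : ℝ) ≤ (r : ℝ) * (E.card : ℝ) / (n : ℝ) →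
        ∃ I : Finset (Fin n), (∀ e ∈ E, ¬ e ⊆ I) ∧
          c * (n : ℝ) / ((r : ℝ) * (E.card : ℝ) / (n : ℝ)) ^ ((1 : ℝ) / ((r : ℝ) - 1))
            ≤ (I.card : ℝ) := by
  classical
  refine ⟨1/8, by norm_num, ?_⟩
  intro n hn E hEcard hd
  set d : ℝ := (r : ℝ) * (E.card : ℝ) / (n : ℝ) with hd_def
  set q : ℝ := d ^ ((1 : ℝ) / ((r : ℝ) - 1)) with hq_def
  have hd0 : (0 : ℝ) < d := lt_of_lt_of_le one_pos hd
  have hrR : (2 : ℝ) ≤ (r : ℝ) := by exact_mod_cast hr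
  have hr1 : (0 : ℝ) < (r : ℝ) - 1 := by linarith
  have hn0 : (0 : ℝ) < (n : ℝ) := by exact_mod_cast hn
  have hq1 : (1 : ℝ) ≤ q := Real.one_le_rpow hd (by positivity)
  have hq0 : (0 : ℝ) < q := lt_of_lt_of_le one_pos hq1
  have hqd : q ^ (r - 1) = d := by
    rw [hq_def, ← Real.rpow_natCast (d ^ ((1 : ℝ) / ((r : ℝ) - 1))) (r - 1),
      ← Real.rpow_mul hd0.le]
    rw [Nat.cast_sub (by omega), Nat.cast_one]
    rw [one_div_mul_cancel hr1.ne', Real.rpow_one]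
  by_cases hcase : (1 : ℝ)/8 * (n : ℝ) / q ≤ 1
  · refine ⟨{⟨0, by omega⟩}, ?_, ?_⟩
    · intro e he hsub
      have h1 := Finset.card_le_card hsub
      rw [Finset.card_singleton] at h1
      have := hEcard e he
      omega
    · rw [Finset.card_singleton]
      exact_mod_cast hcase
  · push_neg at hcase
    have hx8 : 8 < (n : ℝ) / q := by
      have heq : (1 : ℝ)/8 * (n : ℝ) / q = ((n : ℝ)/q)/8 := by ring
      rw [heq] at hcase
      linarith
    set s : ℕ := ⌊(n : ℝ)/q/2⌋₊ with hs_def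
    have hs_le : (s : ℝ) ≤ (n : ℝ)/q/2 := Nat.floor_le (by positivity)
    have hs_lt : (n : ℝ)/q/2 < (s : ℝ) + 1 := Nat.lt_floor_add_one _
    have hs_ge : (n : ℝ)/q/4 ≤ (s : ℝ) := by linarith
    have hs_n : s ≤ n := by
      have hqn : (n : ℝ)/q ≤ (n : ℝ) := by
        rw [div_le_iff₀ hq0]
        nlinarith
      have : (s : ℝ) ≤ (n : ℝ) := by linarith
      exact_mod_cast this
    obtain ⟨T, hTmem, hTsparse⟩ := aux_exists_sparse_subset E hEcard s hs_n
    rw [Finset.mem_powersetCard] at hTmem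
    set g : Finset (Fin n) → Fin n :=
      fun e => if h : e.Nonempty then h.choose else ⟨0, by omega⟩ with hg
    set B := (E.filter (fun e => e ⊆ T)).image g with hB
    refine ⟨T \ B, ?_, ?_⟩
    · intro e he hsub
      have heT : e ⊆ T := hsub.trans Finset.sdiff_subset
      have hne : e.Nonempty := by
        rw [← Finset.card_pos, hEcard e he]
        omega
      have hge : g e ∈ e := by
        rw [hg]
        simp only
        rw [dif_pos hne]
        exact hne.choose_spec
      have hgB : g e ∈ B := Finset.mem_image_of_mem g (Finset.mem_filter.2 ⟨he, heT⟩)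
      have hmem := hsub hge
      rw [Finset.mem_sdiff] at hmem
      exact hmem.2 hgB
    · -- cardinality bound
      set fT := (E.filter (fun e => e ⊆ T)).card with hfT
      have hBcard : B.card ≤ fT := Finset.card_image_le
      have hTsub : T ⊆ (T \ B) ∪ B := by
        intro v hv
        by_cases hvB : v ∈ B
        · exact Finset.mem_union_right _ hvB
        · exact Finset.mem_union_left _ (Finset.mem_sdiff.2 ⟨hv, hvB⟩)
      have hcard : s ≤ (T \ B).card + fT := by
        calc s = T.card := hTmem.2.symm
          _ ≤ ((T \ B) ∪ B).card := Finset.card_le_card hTsub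
          _ ≤ (T \ B).card + B.card := Finset.card_union_le _ _
          _ ≤ (T \ B).card + fT := by omega
      -- real arithmetic
      have hfR : (fT : ℝ) * (n : ℝ) ^ r ≤ (E.card : ℝ) * (s : ℝ) ^ r := by
        exact_mod_cast hTsparse
      have hrne : (r : ℝ) ≠ 0 := by positivity
      have hmE : (E.card : ℝ) = d * n / r := by
        rw [hd_def]
        field_simp
      have hqr : q ^ r = d * q := by
        rw [show r = (r - 1) + 1 by omega, pow_succ, hqd]
      have h2 : (E.card : ℝ) * ((n : ℝ)/q/2) ^ r
          = (n : ℝ) ^ r * ((n : ℝ)/q/((r : ℝ) * 2 ^ r)) := by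
        have e1 : ((n : ℝ)/q/2) ^ r = (n : ℝ) ^ r / (q ^ r * 2 ^ r) := by
          rw [div_div, div_pow, mul_pow]
        rw [e1, hqr, hmE]
        field_simp
      have hpow_le : (s : ℝ) ^ r ≤ ((n : ℝ)/q/2) ^ r :=
        pow_le_pow_left₀ (by positivity) hs_le r
      have hchain : (fT : ℝ) * (n : ℝ) ^ r
          ≤ (n : ℝ) ^ r * ((n : ℝ)/q/((r : ℝ) * 2 ^ r)) := by
        calc (fT : ℝ) * (n : ℝ) ^ r ≤ (E.card : ℝ) * (s : ℝ) ^ r := hfR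
          _ ≤ (E.card : ℝ) * ((n : ℝ)/q/2) ^ r :=
              mul_le_mul_of_nonneg_left hpow_le (Nat.cast_nonneg _)
          _ = (n : ℝ) ^ r * ((n : ℝ)/q/((r : ℝ) * 2 ^ r)) := h2
      have hrpow8 : (8 : ℝ) ≤ (r : ℝ) * 2 ^ r := by
        have h4 : (4 : ℝ) ≤ 2 ^ r := by
          calc (4 : ℝ) = 2 ^ 2 := by norm_num
            _ ≤ 2 ^ r := pow_le_pow_right₀ one_le_two hr
        nlinarith
      have hfT8 : (fT : ℝ) ≤ ((n : ℝ)/q)/8 := by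
        have hnr : (0 : ℝ) < (n : ℝ) ^ r := by positivity
        have hstep : (n : ℝ)/q/((r : ℝ) * 2 ^ r) ≤ ((n : ℝ)/q)/8 :=
          div_le_div_of_nonneg_left (div_nonneg hn0.le hq0.le) (by norm_num) hrpow8
        have : (fT : ℝ) * (n : ℝ) ^ r ≤ (((n : ℝ)/q)/8) * (n : ℝ) ^ r := by
          calc (fT : ℝ) * (n : ℝ) ^ r
              ≤ (n : ℝ) ^ r * ((n : ℝ)/q/((r : ℝ) * 2 ^ r)) := hchain
            _ ≤ (n : ℝ) ^ r * (((n : ℝ)/q)/8) :=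
                mul_le_mul_of_nonneg_left hstep (by positivity)
            _ = (((n : ℝ)/q)/8) * (n : ℝ) ^ r := by ring
        exact le_of_mul_le_mul_right this hnr
      have hIcard : (s : ℝ) ≤ ((T \ B).card : ℝ) + (fT : ℝ) := by
        exact_mod_cast hcard
      have hgoal : (1 : ℝ)/8 * (n : ℝ) / q = ((n : ℝ)/q)/8 := by ring
      rw [hgoal]
      linarith
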